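/- Let λ be an infinite cardinal and B a Boolean algebra with density(B ↾ x) = λ for every nonzero x ∈ B. If μ is a regular infinite cardinal with μ < λ, then B has a subalgebra B' such that density(B' ↾ x) = μ for every nonzero x ∈ B'. -/

import Mathlib

/-- A (Boolean) subalgebra, as a subset. -/
def IsSubalg {B : Type*} [BooleanAlgebra B] (S : Set B) : Prop :=
  ⊥ ∈ S ∧ ⊤ ∈ S ∧ (∀ x ∈ S, ∀ y ∈ S, x ⊔ y ∈ S) ∧
    (∀ x ∈ S, ∀ y ∈ S, x ⊓ y ∈ S) ∧ (∀ x ∈ S, xᶜ ∈ S)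

/-- The density of `T ↾ x` for `T` a subalgebra of `B`. -/
noncomputable def densIn {B : Type u} [BooleanAlgebra B] (T : Set B) (x : B) :
    Cardinal.{u} :=
  sInf {c | ∃ D : Set B, D ⊆ T ∧ (∀ d ∈ D, ⊥ < d ∧ d ≤ x) ∧
    (∀ z ∈ T, ⊥ < z → z ≤ x → ∃ d ∈ D, d ≤ z) ∧ Cardinal.mk D = c}

namespace Stmt12Aux

open Cardinal Set

variable {B : Type u} [BooleanAlgebra B]

/-- One closure step. -/
def clStep (s : Set B) : Set B :=
  s ∪ {⊥, ⊤} ∪ Set.image2 (· ⊔ ·) s s ∪ Set.image2 (· ⊓ ·) s s ∪ compl '' s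

lemma subset_clStep (s : Set B) : s ⊆ clStep s :=
  fun x hx => Or.inl (Or.inl (Or.inl (Or.inl hx)))

lemma clStep_mono : Monotone (clStep (B := B)) := by
  intro s t hst x hx
  rcases hx with ((((h | h) | h) | h) | h)
  · exact Or.inl (Or.inl (Or.inl (Or.inl (hst h))))
  · exact Or.inl (Or.inl (Or.inl (Or.inr h)))
  · exact Or.inl (Or.inl (Or.inr (Set.image2_subset hst hst h)))
  · exact Or.inl (Or.inr (Set.image2_subset hst hst h))
  · exact Or.inr (Set.image_mono hst h)

/-- Closure under the Boolean operations. -/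
def cl (s : Set B) : Set B := ⋃ n : ULift.{u} ℕ, clStep^[n.down] s

lemma iterate_subset_cl (s : Set B) (n : ℕ) : clStep^[n] s ⊆ cl s :=
  Set.subset_iUnion (fun m : ULift.{u} ℕ => clStep^[m.down] s) (ULift.up n)

lemma subset_cl (s : Set B) : s ⊆ cl s := iterate_subset_cl s 0

lemma mem_cl {s : Set B} {x : B} : x ∈ cl s ↔ ∃ n : ℕ, x ∈ clStep^[n] s := by
  simp only [cl, Set.mem_iUnion]
  exact ⟨fun ⟨n, h⟩ => ⟨n.down, h⟩, fun ⟨n, h⟩ => ⟨ULift.up n, h⟩⟩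

lemma iterate_le_iterate (s : Set B) {m n : ℕ} (h : m ≤ n) :
    clStep^[m] s ⊆ clStep^[n] s := by
  induction n with
  | zero => simpa [Nat.le_zero.mp h]
  | succ k ih =>
    rcases Nat.lt_or_ge m (k + 1) with h' | h'
    · refine (ih (Nat.lt_succ_iff.mp h')).trans ?_
      rw [Function.iterate_succ_apply']
      exact subset_clStep _
    · have : m = k + 1 := le_antisymm h h'
      simp [this]

lemma isSubalg_cl (s : Set B) : IsSubalg (cl s) := by
  have hbot : (⊥ : B) ∈ cl s := by
    rw [mem_cl]; exact ⟨1, Or.inl (Or.inl (Or.inl (Or.inr (Or.inl rfl))))⟩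
  have htop : (⊤ : B) ∈ cl s := by
    rw [mem_cl]; exact ⟨1, Or.inl (Or.inl (Or.inl (Or.inr (Or.inr rfl))))⟩
  refine ⟨hbot, htop, ?_, ?_, ?_⟩
  · intro x hx y hy
    rw [mem_cl] at hx hy ⊢
    obtain ⟨m, hm⟩ := hx; obtain ⟨n, hn⟩ := hy
    refine ⟨max m n + 1, ?_⟩
    rw [Function.iterate_succ_apply']
    exact Or.inl (Or.inl (Or.inr (Set.mem_image2_of_mem
      (iterate_le_iterate s (le_max_left m n) hm)
      (iterate_le_iterate s (le_max_right m n) hn))))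
  · intro x hx y hy
    rw [mem_cl] at hx hy ⊢
    obtain ⟨m, hm⟩ := hx; obtain ⟨n, hn⟩ := hy
    refine ⟨max m n + 1, ?_⟩
    rw [Function.iterate_succ_apply']
    exact Or.inl (Or.inr (Set.mem_image2_of_mem
      (iterate_le_iterate s (le_max_left m n) hm)
      (iterate_le_iterate s (le_max_right m n) hn)))
  · intro x hx
    rw [mem_cl] at hx ⊢
    obtain ⟨n, hn⟩ := hx
    refine ⟨n + 1, ?_⟩
    rw [Function.iterate_succ_apply']
    exact Or.inr ⟨x, hn, rfl⟩

lemma mk_clStep_le (s : Set B) : #(clStep s) ≤ max #s ℵ₀ := by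
  set m := max #s ℵ₀ with hm
  have hs : #s ≤ m := le_max_left _ _
  have hℵ : ℵ₀ ≤ m := le_max_right _ _
  have hmul : #s * #s ≤ m := by
    calc #s * #s ≤ m * m := mul_le_mul' hs hs
    _ = m := Cardinal.mul_eq_self hℵ
  have hpair : #({⊥, ⊤} : Set B) ≤ m :=
    le_trans (le_of_lt (Set.toFinite _).lt_aleph0) hℵ
  have himg2sup : #(Set.image2 (· ⊔ ·) s s) ≤ m := Cardinal.mk_image2_le.trans hmul
  have himg2inf : #(Set.image2 (· ⊓ ·) s s) ≤ m := Cardinal.mk_image2_le.trans hmul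
  have himg : #(compl '' s) ≤ m := Cardinal.mk_image_le.trans hs
  calc #(clStep s) ≤
      #((s ∪ {⊥, ⊤} ∪ Set.image2 (· ⊔ ·) s s ∪ Set.image2 (· ⊓ ·) s s : Set B))
        + #(compl '' s) := Cardinal.mk_union_le _ _
    _ ≤ m := by
        refine Cardinal.add_le_of_le hℵ ?_ himg
        refine le_trans (Cardinal.mk_union_le _ _) (Cardinal.add_le_of_le hℵ ?_ himg2inf)
        refine le_trans (Cardinal.mk_union_le _ _) (Cardinal.add_le_of_le hℵ ?_ himg2sup)
        exact le_trans (Cardinal.mk_union_le _ _) (Cardinal.add_le_of_le hℵ hs hpair)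

lemma mk_iterate_le (s : Set B) (n : ℕ) : #(clStep^[n] s) ≤ max #s ℵ₀ := by
  induction n with
  | zero => exact le_max_left _ _
  | succ k ih =>
    rw [Function.iterate_succ_apply']
    refine (mk_clStep_le _).trans ?_
    simp only [max_le_iff]
    exact ⟨ih, le_max_right _ _⟩

lemma mk_cl_le (s : Set B) : #(cl s) ≤ max #s ℵ₀ := by
  have h1 : #(cl s) ≤ #(ULift.{u} ℕ) * ⨆ n : ULift.{u} ℕ, #(clStep^[n.down] s) :=
    Cardinal.mk_iUnion_le _
  have h2 : (⨆ n : ULift.{u} ℕ, #(clStep^[n.down] s)) ≤ max #s ℵ₀ :=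
    ciSup_le' fun n => mk_iterate_le s n.down
  have h3 : #(ULift.{u} ℕ) = ℵ₀ := by simp
  refine h1.trans ?_
  rw [h3]
  calc ℵ₀ * (⨆ n : ULift.{u} ℕ, #(clStep^[n.down] s)) ≤ max #s ℵ₀ * max #s ℵ₀ :=
        mul_le_mul' (le_max_right _ _) h2
    _ = max #s ℵ₀ := Cardinal.mul_eq_self (le_max_right _ _)

/-- The transfinite tower. -/
noncomputable def tw (f : B → Set B → B) : Ordinal.{u} → Set B := fun α =>
  Ordinal.lt_wf.fix
    (fun α ih =>
      cl (insert ⊤ (⋃ β : Set.Iio α, ih β.1 β.2) ∪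
        (fun t => f t (insert ⊤ (⋃ β : Set.Iio α, ih β.1 β.2))) ''
          insert ⊤ (⋃ β : Set.Iio α, ih β.1 β.2))) α

/-- The base set at stage `α`. -/
noncomputable def twBase (f : B → Set B → B) (α : Ordinal.{u}) : Set B :=
  insert ⊤ (⋃ β : Set.Iio α, tw f β.1)

lemma tw_eq (f : B → Set B → B) (α : Ordinal.{u}) :
    tw f α = cl (twBase f α ∪ (fun t => f t (twBase f α)) '' twBase f α) := by
  show Ordinal.lt_wf.fix _ α = _
  rw [WellFounded.fix_eq]
  rfl

lemma twBase_subset_tw (f : B → Set B → B) (α : Ordinal.{u}) :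
    twBase f α ⊆ tw f α := by
  rw [tw_eq]
  exact (Set.subset_union_left).trans (subset_cl _)

lemma tw_subset_twBase (f : B → Set B → B) {α β : Ordinal.{u}} (h : β < α) :
    tw f β ⊆ twBase f α :=
  (Set.subset_iUnion (fun γ : Set.Iio α => tw f γ.1) ⟨β, h⟩).trans (Set.subset_insert _ _)

lemma tw_mono (f : B → Set B → B) {α β : Ordinal.{u}} (h : β ≤ α) :
    tw f β ⊆ tw f α := by
  rcases eq_or_lt_of_le h with rfl | h
  · exact subset_rfl
  · exact (tw_subset_twBase f h).trans (twBase_subset_tw f α)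

lemma isSubalg_tw (f : B → Set B → B) (α : Ordinal.{u}) : IsSubalg (tw f α) := by
  rw [tw_eq]; exact isSubalg_cl _

lemma mk_tw_le (f : B → Set B → B) {mu : Cardinal.{u}} (hmu : ℵ₀ ≤ mu) :
    ∀ α : Ordinal.{u}, α ≤ mu.ord → #(tw f α) ≤ mu := by
  intro α
  induction α using Ordinal.induction with
  | h α ih =>
    intro hα
    have hbaseU : #(⋃ β : Set.Iio α, tw f β.1) ≤ mu := by
      have hre : (⋃ β : Set.Iio α, tw f β.1) =
          ⋃ i : α.ToType, tw f (((Ordinal.ToType.mk (o := α)).symm i).1) := by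
        ext x
        simp only [Set.mem_iUnion]
        constructor
        · rintro ⟨β, hb⟩
          exact ⟨(Ordinal.ToType.mk (o := α)) β, by simpa using hb⟩
        · rintro ⟨i, hi⟩
          exact ⟨_, hi⟩
      rw [hre]
      refine (Cardinal.mk_iUnion_le _).trans ?_
      have h1 : #α.ToType ≤ mu := by
        rw [Cardinal.mk_toType]
        calc α.card ≤ mu.ord.card := Ordinal.card_le_card hα
        _ = mu := Cardinal.card_ord mu
      have h2 : (⨆ i : α.ToType, #(tw f (((Ordinal.ToType.mk (o := α)).symm i).1))) ≤ mu :=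
        ciSup_le' fun i => ih _ ((Ordinal.ToType.mk (o := α)).symm i).2 (le_of_lt
          (lt_of_lt_of_le ((Ordinal.ToType.mk (o := α)).symm i).2 hα))
      calc #α.ToType * (⨆ i : α.ToType, #(tw f (((Ordinal.ToType.mk (o := α)).symm i).1)))
          ≤ mu * mu := mul_le_mul' h1 h2
        _ = mu := Cardinal.mul_eq_self hmu
    have hbase : #(twBase f α) ≤ mu := by
      refine Cardinal.mk_insert_le.trans ?_
      exact Cardinal.add_le_of_le hmu hbaseU (le_trans (by simp) hmu)
    rw [tw_eq]
    refine (mk_cl_le _).trans ?_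
    have : #(twBase f α ∪ (fun t => f t (twBase f α)) '' twBase f α : Set B) ≤ mu := by
      refine (Cardinal.mk_union_le _ _).trans ?_
      exact Cardinal.add_le_of_le hmu hbase (Cardinal.mk_image_le.trans hbase)
    simp only [max_le_iff]
    exact ⟨this, hmu⟩

lemma mk_twBase_le (f : B → Set B → B) {mu : Cardinal.{u}} (hmu : ℵ₀ ≤ mu)
    {α : Ordinal.{u}} (hα : α ≤ mu.ord) : #(twBase f α) ≤ mu := by
  refine Cardinal.mk_insert_le.trans (Cardinal.add_le_of_le hmu ?_ (le_trans (by simp) hmu))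
  have hre : (⋃ β : Set.Iio α, tw f β.1) =
      ⋃ i : α.ToType, tw f (((Ordinal.ToType.mk (o := α)).symm i).1) := by
    ext x
    simp only [Set.mem_iUnion]
    constructor
    · rintro ⟨β, hb⟩
      exact ⟨(Ordinal.ToType.mk (o := α)) β, by simpa using hb⟩
    · rintro ⟨i, hi⟩
      exact ⟨_, hi⟩
  rw [hre]
  refine (Cardinal.mk_iUnion_le _).trans ?_
  have h1 : #α.ToType ≤ mu := by
    rw [Cardinal.mk_toType]
    calc α.card ≤ mu.ord.card := Ordinal.card_le_card hα
    _ = mu := Cardinal.card_ord mu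
  have h2 : (⨆ i : α.ToType, #(tw f (((Ordinal.ToType.mk (o := α)).symm i).1))) ≤ mu :=
    ciSup_le' fun i => mk_tw_le f hmu _ (le_of_lt
      (lt_of_lt_of_le ((Ordinal.ToType.mk (o := α)).symm i).2 hα))
  calc #α.ToType * (⨆ i : α.ToType, #(tw f (((Ordinal.ToType.mk (o := α)).symm i).1)))
      ≤ mu * mu := mul_le_mul' h1 h2
    _ = mu := Cardinal.mul_eq_self hmu

end Stmt12Aux

open Stmt12Aux Cardinal Set in
/-- If every nonzero relative algebra of `B` has density `λ` and `μ` is an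
infinite regular cardinal `< λ`, then `B` has a subalgebra all of whose
nonzero relative algebras have density `μ`. -/
theorem stmt_12 {B : Type u} [BooleanAlgebra B] (lam mu : Cardinal.{u})
    (hlam : ∀ x : B, x ≠ ⊥ → densIn Set.univ x = lam)
    (hmu : mu.IsRegular) (hmulam : mu < lam) :
    ∃ S : Set B, IsSubalg S ∧ ∀ x ∈ S, x ≠ ⊥ → densIn S x = mu := by
  classical
  have hℵmu : ℵ₀ ≤ mu := hmu.aleph0_le
  -- choice of splitting elements
  have hex : ∀ (x : B) (T : Set B), ∃ z : B, x ≠ ⊥ → #T < lam →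
      ⊥ < z ∧ z ≤ x ∧ ∀ t ∈ T, ⊥ < t → ¬ t ≤ z := by
    intro x T
    by_cases hx : x ≠ ⊥ ∧ #T < lam
    · obtain ⟨hx, hT⟩ := hx
      by_contra hcon
      push_neg at hcon
      -- every candidate z fails, so {t ∈ T | ⊥ < t ∧ t ≤ x} is dense below x
      have hdense : ∀ z : B, ⊥ < z → z ≤ x →
          ∃ d ∈ {t ∈ T | ⊥ < t ∧ t ≤ x}, d ≤ z := by
        intro z hz hzx
        obtain ⟨t, ht, htpos, htz⟩ := (hcon z).2.2 hz hzx
        exact ⟨t, ⟨ht, htpos, htz.trans hzx⟩, htz⟩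
      have hmem : #({t ∈ T | ⊥ < t ∧ t ≤ x} : Set B) ∈
          {c | ∃ D : Set B, D ⊆ (Set.univ : Set B) ∧ (∀ d ∈ D, ⊥ < d ∧ d ≤ x) ∧
            (∀ z ∈ (Set.univ : Set B), ⊥ < z → z ≤ x → ∃ d ∈ D, d ≤ z) ∧
            Cardinal.mk D = c} := by
        refine ⟨_, Set.subset_univ _, fun d hd => hd.2, fun z _ hz hzx => hdense z hz hzx, rfl⟩
      have hle : densIn Set.univ x ≤ #({t ∈ T | ⊥ < t ∧ t ≤ x} : Set B) := csInf_le' hmem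
      have hlt : densIn Set.univ x < lam :=
        lt_of_le_of_lt (hle.trans (Cardinal.mk_le_mk_of_subset (Set.sep_subset _ _))) hT
      rw [hlam x hx] at hlt
      exact absurd hlt (lt_irrefl _)
    · exact ⟨⊥, fun h1 h2 => absurd ⟨h1, h2⟩ hx⟩
  choose f hf using hex
  -- the subalgebra
  set S : Set B := ⋃ α : Set.Iio mu.ord, tw f α.1 with hS
  have htw_subset_S : ∀ {α : Ordinal.{u}}, α < mu.ord → tw f α ⊆ S := by
    intro α hα
    exact Set.subset_iUnion (fun γ : Set.Iio mu.ord => tw f γ.1) ⟨α, hα⟩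
  have hmemS : ∀ {y : B}, y ∈ S → ∃ α : Ordinal.{u}, α < mu.ord ∧ y ∈ tw f α := by
    intro y hy
    rw [hS, Set.mem_iUnion] at hy
    obtain ⟨⟨α, hα⟩, h⟩ := hy
    exact ⟨α, hα, h⟩
  have hord_pos : (0 : Ordinal.{u}) < mu.ord := (Cardinal.isSuccLimit_ord hℵmu).pos
  have hzero : tw f 0 ⊆ S := htw_subset_S hord_pos
  -- S is a subalgebra
  have hsub : IsSubalg S := by
    refine ⟨hzero (isSubalg_tw f 0).1, hzero (isSubalg_tw f 0).2.1, ?_, ?_, ?_⟩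
    · intro x hx y hy
      obtain ⟨α, hα, hxα⟩ := hmemS hx
      obtain ⟨β, hβ, hyβ⟩ := hmemS hy
      have h1 : x ∈ tw f (max α β) := tw_mono f (le_max_left _ _) hxα
      have h2 : y ∈ tw f (max α β) := tw_mono f (le_max_right _ _) hyβ
      exact htw_subset_S (max_lt hα hβ)
        ((isSubalg_tw f (max α β)).2.2.1 x h1 y h2)
    · intro x hx y hy
      obtain ⟨α, hα, hxα⟩ := hmemS hx
      obtain ⟨β, hβ, hyβ⟩ := hmemS hy
      have h1 : x ∈ tw f (max α β) := tw_mono f (le_max_left _ _) hxα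
      have h2 : y ∈ tw f (max α β) := tw_mono f (le_max_right _ _) hyβ
      exact htw_subset_S (max_lt hα hβ)
        ((isSubalg_tw f (max α β)).2.2.2.1 x h1 y h2)
    · intro x hx
      obtain ⟨α, hα, hxα⟩ := hmemS hx
      exact htw_subset_S hα ((isSubalg_tw f α).2.2.2.2 x hxα)
  -- cardinality of S
  have hmkS : #S ≤ mu := by
    have : S ⊆ twBase f mu.ord := by
      intro y hy
      obtain ⟨α, hα, h⟩ := hmemS hy
      exact tw_subset_twBase f hα h
    exact (Cardinal.mk_le_mk_of_subset this).trans (mk_twBase_le f hℵmu le_rfl)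
  refine ⟨S, hsub, ?_⟩
  intro x hxS hx
  have hxpos : ⊥ < x := bot_lt_iff_ne_bot.mpr hx
  -- the lower bound: every dense subset has size ≥ mu
  have hlow : ∀ c ∈ {c | ∃ D : Set B, D ⊆ S ∧ (∀ d ∈ D, ⊥ < d ∧ d ≤ x) ∧
      (∀ z ∈ S, ⊥ < z → z ≤ x → ∃ d ∈ D, d ≤ z) ∧ Cardinal.mk D = c}, mu ≤ c := by
    rintro c ⟨D, hDS, hDel, hDdense, rfl⟩
    by_contra hcon
    push_neg at hcon
    -- D sits inside some stage γ
    have hidx : ∀ d : D, ∃ α : Ordinal.{u}, α < mu.ord ∧ (d : B) ∈ tw f α :=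
      fun d => hmemS (hDS d.2)
    choose idx hidx1 hidx2 using hidx
    have hsupD : iSup idx < mu.ord :=
      Cardinal.iSup_lt_ord_of_isRegular hmu hcon hidx1
    obtain ⟨βx, hβx, hxβ⟩ := hmemS hxS
    set γ : Ordinal.{u} := max (iSup idx) βx with hγ
    have hγlt : γ < mu.ord := max_lt hsupD hβx
    have hγsucc : γ < γ + 1 := by
      rw [Ordinal.add_one_eq_succ]; exact Order.lt_succ γ
    have hγ1 : γ + 1 < mu.ord := by
      rw [Ordinal.add_one_eq_succ]
      exact (Cardinal.isSuccLimit_ord hℵmu).succ_lt hγlt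
    set T : Set B := twBase f (γ + 1) with hT
    have hmkT : #T < lam :=
      lt_of_le_of_lt (mk_twBase_le f hℵmu hγ1.le) hmulam
    have hxT : x ∈ T :=
      tw_subset_twBase f (lt_of_le_of_lt (le_max_right _ _) hγsucc) hxβ
    -- the new element z
    set z : B := f x T with hz
    obtain ⟨hzpos, hzx, hzavoid⟩ := hf x T hx hmkT
    have hzmem : z ∈ tw f (γ + 1) := by
      rw [tw_eq]
      exact subset_cl _ (Or.inr ⟨x, hxT, rfl⟩)
    have hzS : z ∈ S := htw_subset_S hγ1 hzmem
    obtain ⟨d, hdD, hdz⟩ := hDdense z hzS hzpos hzx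
    have hdT : d ∈ T := by
      have h1 : idx ⟨d, hdD⟩ ≤ γ :=
        le_trans (Ordinal.le_iSup idx ⟨d, hdD⟩) (le_max_left _ _)
      exact tw_subset_twBase f (lt_of_le_of_lt h1 hγsucc) (hidx2 ⟨d, hdD⟩)
    exact hzavoid d hdT (hDel d hdD).1 hdz
  -- the witness dense set
  set D0 : Set B := {s ∈ S | ⊥ < s ∧ s ≤ x} with hD0
  have hD0mem : #D0 ∈ {c | ∃ D : Set B, D ⊆ S ∧ (∀ d ∈ D, ⊥ < d ∧ d ≤ x) ∧
      (∀ z ∈ S, ⊥ < z → z ≤ x → ∃ d ∈ D, d ≤ z) ∧ Cardinal.mk D = c} :=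
    ⟨D0, Set.sep_subset _ _, fun d hd => hd.2,
      fun z hzS hz hzx => ⟨z, ⟨hzS, hz, hzx⟩, le_rfl⟩, rfl⟩
  have hD0le : #D0 ≤ mu := (Cardinal.mk_le_mk_of_subset (Set.sep_subset _ _)).trans hmkS
  have hD0eq : #D0 = mu := le_antisymm hD0le (hlow _ hD0mem)
  refine le_antisymm ?_ (le_csInf ⟨_, hD0mem⟩ hlow)
  calc densIn S x ≤ #D0 := csInf_le' hD0mem
    _ = mu := hD0eq
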